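/- Let p be a prime with p ≠ 2 and p ≠ 5. The Prüfer p-group C_{p^∞} admits an automorphism φ satisfying φ² = φ + 1 if and only if p ≡ ±1 (mod 5). -/

import Mathlib

/-- The Prüfer `p`-group, realized as the `p`-primary component of `ℚ/ℤ`
(here `ℚ/ℤ` is `AddCircle (1 : ℚ)`). -/
def PruferGroup (p : ℕ) : AddSubgroup (AddCircle (1 : ℚ)) where
  carrier := {x | ∃ n : ℕ, p ^ n • x = 0}
  zero_mem' := ⟨0, smul_zero _⟩
  add_mem' := by
    rintro x y ⟨n, hn⟩ ⟨m, hm⟩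
    refine ⟨n + m, ?_⟩
    rw [smul_add, pow_add, mul_comm, mul_smul, hn, smul_zero, zero_add, mul_comm, mul_smul, hm, smul_zero]
  neg_mem' := by
    rintro x ⟨n, hn⟩
    exact ⟨n, by rw [smul_neg, hn, neg_zero]⟩

namespace Stmt7Aux

open PadicInt Polynomial

variable {p : ℕ} [hp : Fact p.Prime]

lemma not_sq_two : ¬ IsSquare (2 : ZMod 5) := by decide

lemma not_sq_three : ¬ IsSquare (3 : ZMod 5) := by decide

lemma sq_four : IsSquare (4 : ZMod 5) := ⟨2, by decide⟩

lemma exists_kill (x : PruferGroup p) : ∃ n : ℕ, p ^ n • x = 0 := by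
  obtain ⟨n, hn⟩ := x.2
  exact ⟨n, Subtype.ext (by simpa using hn)⟩

lemma smul_mod {x : PruferGroup p} {n : ℕ} (hx : p ^ n • x = 0) (a : ℕ) :
    a • x = (a % p ^ n) • x := by
  conv_lhs => rw [← Nat.div_add_mod a (p ^ n)]
  rw [add_smul, mul_comm, mul_smul, hx, smul_zero, zero_add]

lemma smul_congr {x : PruferGroup p} {n : ℕ} (hx : p ^ n • x = 0) {a b : ℕ}
    (h : a % p ^ n = b % p ^ n) : a • x = b • x := by
  rw [smul_mod hx a, h, ← smul_mod hx b]

lemma kill_mono {x : PruferGroup p} {n m : ℕ} (h : n ≤ m) (hx : p ^ n • x = 0) :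
    p ^ m • x = 0 := by
  rw [← Nat.sub_add_cancel h, pow_add, mul_smul, hx, smul_zero]

noncomputable def pact (z : ℤ_[p]) (x : PruferGroup p) : PruferGroup p :=
  ((toZModPow ((exists_kill x).choose) z).val) • x

lemma val_smul_congr (z : ℤ_[p]) {x : PruferGroup p} {n m : ℕ} (hnm : n ≤ m)
    (hx : p ^ n • x = 0) :
    ((toZModPow m z).val) • x = ((toZModPow n z).val) • x := by
  haveI : NeZero (p ^ m) := ⟨pow_ne_zero _ hp.out.ne_zero⟩
  apply smul_congr hx
  have h1 : toZModPow n z = ZMod.cast (toZModPow m z) := (cast_toZModPow n m hnm z).symm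
  rw [h1, ← ZMod.natCast_val, ZMod.val_natCast, Nat.mod_mod_of_dvd _ dvd_rfl]

lemma pact_eq (z : ℤ_[p]) {x : PruferGroup p} {n : ℕ} (hx : p ^ n • x = 0) :
    pact z x = ((toZModPow n z).val) • x := by
  unfold pact
  have hxm : p ^ (exists_kill x).choose • x = 0 := (exists_kill x).choose_spec
  rcases le_total n (exists_kill x).choose with h | h
  · exact val_smul_congr z h hx
  · exact (val_smul_congr z h hxm).symm

lemma pact_add (z : ℤ_[p]) (x y : PruferGroup p) :
    pact z (x + y) = pact z x + pact z y := by
  obtain ⟨n, hn⟩ := exists_kill x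
  obtain ⟨m, hm⟩ := exists_kill y
  have hx : p ^ (max n m) • x = 0 := kill_mono (le_max_left n m) hn
  have hy : p ^ (max n m) • y = 0 := kill_mono (le_max_right n m) hm
  have hxy : p ^ (max n m) • (x + y) = 0 := by rw [smul_add, hx, hy, add_zero]
  rw [pact_eq z hxy, pact_eq z hx, pact_eq z hy, smul_add]

lemma pact_mul (z w : ℤ_[p]) (x : PruferGroup p) :
    pact (z * w) x = pact z (pact w x) := by
  obtain ⟨n, hn⟩ := exists_kill x
  have hwx : p ^ n • pact w x = 0 := by
    rw [pact_eq w hn, smul_comm, hn, smul_zero]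
  rw [pact_eq (z * w) hn, pact_eq z hwx, pact_eq w hn, smul_smul]
  exact smul_congr hn (by rw [map_mul, ZMod.val_mul, Nat.mod_mod_of_dvd _ dvd_rfl])

lemma pact_addz (z w : ℤ_[p]) (x : PruferGroup p) :
    pact (z + w) x = pact z x + pact w x := by
  haveI : NeZero p := ⟨hp.out.ne_zero⟩
  obtain ⟨n, hn⟩ := exists_kill x
  haveI : NeZero (p ^ n) := ⟨pow_ne_zero _ hp.out.ne_zero⟩
  rw [pact_eq (z + w) hn, pact_eq z hn, pact_eq w hn, ← add_smul]
  exact smul_congr hn (by rw [map_add, ZMod.val_add, Nat.mod_mod_of_dvd _ dvd_rfl])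

lemma pact_one (x : PruferGroup p) : pact 1 x = x := by
  obtain ⟨n, hn⟩ := exists_kill x
  have hn' : p ^ (n + 1) • x = 0 := kill_mono (Nat.le_succ n) hn
  rw [pact_eq 1 hn', map_one]
  have h2 : 1 < p ^ (n + 1) := Nat.one_lt_pow (Nat.succ_ne_zero n) hp.out.one_lt
  rw [ZMod.val_one_eq_one_mod, Nat.mod_eq_of_lt h2, one_smul]

lemma exists_phi (hp2 : p ≠ 2) (hp5 : p ≠ 5) (h5 : IsSquare (5 : ZMod p)) :
    ∃ φ : PruferGroup p ≃+ PruferGroup p, ∀ x, φ (φ x) = φ x + x := by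
  haveI : NeZero p := ⟨hp.out.ne_zero⟩
  obtain ⟨s, hs⟩ := h5
  have h2 : (2 : ZMod p) ≠ 0 := by
    intro h
    have h' : ((2 : ℕ) : ZMod p) = 0 := by exact_mod_cast h
    rw [ZMod.natCast_eq_zero_iff] at h'
    exact hp2 ((Nat.prime_dvd_prime_iff_eq hp.out Nat.prime_two).mp h')
  set α : ZMod p := (1 + s) * (2 : ZMod p)⁻¹ with hα_def
  have key : 2 * α = 1 + s := by
    rw [hα_def]
    field_simp
  have hα : α ^ 2 = α + 1 := by
    have h4 : (2 : ZMod p) * 2 ≠ 0 := mul_ne_zero h2 h2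
    apply mul_left_cancel₀ h4
    linear_combination (2 * α - 1 + s) * key - hs
  -- lift to ℤ_[p] via Hensel's lemma
  set a0 : ℤ_[p] := ((α.val : ℕ) : ℤ_[p]) with ha0_def
  have ht : toZMod a0 = α := by
    rw [ha0_def, map_natCast, ZMod.natCast_val, ZMod.cast_id]
  have hdvd : ∀ y : ℤ_[p], toZMod y = 0 ↔ (p : ℤ_[p]) ∣ y := by
    intro y
    rw [← RingHom.mem_ker, ker_toZMod, maximalIdeal_eq_span_p, Ideal.mem_span_singleton]
  have h5ne : (5 : ZMod p) ≠ 0 := by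
    intro h
    have h' : ((5 : ℕ) : ZMod p) = 0 := by exact_mod_cast h
    rw [ZMod.natCast_eq_zero_iff] at h'
    exact hp5 ((Nat.prime_dvd_prime_iff_eq hp.out (by norm_num)).mp h')
  have hF1 : ‖a0 ^ 2 - a0 - 1‖ < 1 := by
    rw [PadicInt.norm_lt_one_iff_dvd, ← hdvd]
    rw [map_sub, map_sub, map_pow, map_one, ht, hα]
    ring
  have hF2 : ‖2 * a0 - 1‖ = 1 := by
    refine le_antisymm (PadicInt.norm_le_one _) ?_
    by_contra hlt
    push_neg at hlt
    rw [PadicInt.norm_lt_one_iff_dvd, ← hdvd, map_sub, map_mul, map_one, map_ofNat, ht] at hlt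
    apply h5ne
    linear_combination (2 * α - 1) * hlt - 4 * hα
  set F : Polynomial ℤ_[p] := X ^ 2 - X - 1 with hF_def
  have heval : ∀ y : ℤ_[p], F.eval y = y ^ 2 - y - 1 := by intro y; simp [hF_def]
  have hdeval : F.derivative.eval a0 = 2 * a0 - 1 := by
    simp [hF_def]
    exact Or.inl one_add_one_eq_two
  have hnorm : ‖F.eval a0‖ < ‖F.derivative.eval a0‖ ^ 2 := by
    rw [heval, hdeval, hF2, one_pow]
    exact hF1
  obtain ⟨z, hz, -⟩ := hensels_lemma hnorm
  rw [Polynomial.coe_aeval_eq_eval, heval] at hz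
  have hz' : z ^ 2 = z + 1 := by linear_combination hz
  refine ⟨{ toFun := pact z, invFun := pact (z - 1),
            left_inv := ?_, right_inv := ?_, map_add' := pact_add z }, ?_⟩
  · intro x
    rw [← pact_mul, show (z - 1) * z = 1 by linear_combination hz', pact_one]
  · intro x
    rw [← pact_mul, show z * (z - 1) = 1 by linear_combination hz', pact_one]
  · intro x
    show pact z (pact z x) = pact z x + x
    rw [← pact_mul, show z * z = z + 1 by linear_combination hz', pact_addz, pact_one]

lemma forward (φ : PruferGroup p ≃+ PruferGroup p)
    (hφ : ∀ x, φ (φ x) = φ x + x) : IsSquare (5 : ZMod p) := by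
  have hp0 : (p : ℚ) ≠ 0 := Nat.cast_ne_zero.mpr hp.out.ne_zero
  set x0 : AddCircle (1 : ℚ) := (((p : ℚ)⁻¹ : ℚ) : AddCircle (1 : ℚ)) with hx0_def
  have hpx : p • x0 = 0 := by
    rw [hx0_def, ← AddCircle.coe_nsmul, nsmul_eq_mul, mul_inv_cancel₀ hp0]
    exact (AddCircle.coe_period (𝕜 := ℚ) (p := 1))
  have hmem : x0 ∈ PruferGroup p := ⟨1, by simpa [pow_one] using hpx⟩
  set X0 : PruferGroup p := ⟨x0, hmem⟩ with hX0_def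
  have hX0 : p • X0 = 0 := Subtype.ext (by simpa using hpx)
  have torsion : ∀ y : AddCircle (1 : ℚ), p • y = 0 → ∃ m : ℤ, y = m • x0 := by
    intro y hy
    obtain ⟨q, rfl⟩ := QuotientAddGroup.mk_surjective y
    rw [show (QuotientAddGroup.mk q : AddCircle (1:ℚ)) = (q : AddCircle (1:ℚ)) from rfl,
      ← AddCircle.coe_nsmul, AddCircle.coe_eq_zero_iff] at hy
    obtain ⟨n, hn⟩ := hy
    rw [zsmul_eq_mul, mul_one, nsmul_eq_mul] at hn
    refine ⟨n, ?_⟩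
    have hq : q = n • ((p : ℚ)⁻¹) := by
      rw [zsmul_eq_mul, hn, mul_comm (p : ℚ) q, mul_assoc, mul_inv_cancel₀ hp0, mul_one]
    rw [hx0_def, hq, AddCircle.coe_zsmul]
  have hkill : p • φ X0 = 0 := by rw [← map_nsmul, hX0, map_zero]
  obtain ⟨m, hm⟩ := torsion (φ X0 : AddCircle (1 : ℚ)) (by exact_mod_cast congrArg Subtype.val hkill)
  have hφX0 : φ X0 = m • X0 := Subtype.ext (by simpa using hm)
  have heq := hφ X0
  rw [hφX0, map_zsmul, hφX0, smul_smul] at heq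
  have hzero : (m * m - m - 1) • X0 = 0 := by
    rw [sub_smul, sub_smul, one_smul, heq]
    abel
  have hcz : ((m * m - m - 1 : ℤ) : ZMod p) = 0 := by
    have hco : (m * m - m - 1) • x0 = 0 := by simpa using congrArg Subtype.val hzero
    rw [hx0_def, ← AddCircle.coe_zsmul, AddCircle.coe_eq_zero_iff] at hco
    obtain ⟨n, hn⟩ := hco
    rw [zsmul_eq_mul, mul_one, zsmul_eq_mul] at hn
    have hint : (m * m - m - 1 : ℤ) = n * p := by
      have hq : ((m * m - m - 1 : ℤ) : ℚ) = (n : ℚ) * (p : ℚ) := by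
        push_cast
        push_cast at hn
        rw [hn, mul_assoc, inv_mul_cancel₀ hp0, mul_one]
      exact_mod_cast hq
    rw [hint]
    push_cast
    simp [ZMod.natCast_self]
  set α : ZMod p := (m : ZMod p) with hα_def
  have hα : α ^ 2 - α - 1 = 0 := by
    rw [hα_def]
    push_cast at hcz
    linear_combination hcz
  exact ⟨2 * α - 1, by linear_combination (-4 : ZMod p) * hα⟩

end Stmt7Aux

/-- for a prime `p ∉ {2, 5}`, the Prüfer `p`-group has an automorphism `φ`
with `φ² = φ + 1` iff `p ≡ ±1 (mod 5)`. -/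
theorem stmt7 (p : ℕ) (hp : p.Prime) (hp2 : p ≠ 2) (hp5 : p ≠ 5) :
    (∃ φ : PruferGroup p ≃+ PruferGroup p, ∀ x, φ (φ x) = φ x + x) ↔
      (p % 5 = 1 ∨ p % 5 = 4) := by
  haveI : Fact p.Prime := ⟨hp⟩
  haveI : Fact (Nat.Prime 5) := ⟨by norm_num⟩
  have key : IsSquare (5 : ZMod p) ↔ (p % 5 = 1 ∨ p % 5 = 4) := by
    have hrec := ZMod.exists_sq_eq_prime_iff_of_mod_four_eq_one (p := 5) (q := p)
      (by norm_num) hp2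
    have h5 : IsSquare (5 : ZMod p) ↔ IsSquare ((p : ℕ) : ZMod 5) := by
      rw [show (5 : ZMod p) = ((5 : ℕ) : ZMod p) by norm_cast]
      exact hrec.symm
    rw [h5]
    have hne : p % 5 ≠ 0 := by
      intro h
      exact hp5 (((Nat.prime_dvd_prime_iff_eq (by norm_num) hp).mp
        (Nat.dvd_of_mod_eq_zero h)).symm)
    have hmod : ((p : ℕ) : ZMod 5) = ((p % 5 : ℕ) : ZMod 5) := (ZMod.natCast_mod p 5).symm
    rw [hmod]
    have : p % 5 = 1 ∨ p % 5 = 2 ∨ p % 5 = 3 ∨ p % 5 = 4 := by omega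
    rcases this with h | h | h | h <;> rw [h]
    · exact iff_of_true (by rw [show ((1 : ℕ) : ZMod 5) = 1 by norm_cast]; exact IsSquare.one)
        (Or.inl rfl)
    · refine iff_of_false ?_ (by omega)
      rw [show ((2 : ℕ) : ZMod 5) = 2 by norm_cast]
      exact Stmt7Aux.not_sq_two
    · refine iff_of_false ?_ (by omega)
      rw [show ((3 : ℕ) : ZMod 5) = 3 by norm_cast]
      exact Stmt7Aux.not_sq_three
    · refine iff_of_true ?_ (Or.inr rfl)
      rw [show ((4 : ℕ) : ZMod 5) = 4 by norm_cast]
      exact Stmt7Aux.sq_four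
  constructor
  · rintro ⟨φ, hφ⟩
    exact key.mp (Stmt7Aux.forward φ hφ)
  · intro h
    exact Stmt7Aux.exists_phi hp2 hp5 (key.mpr h)
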